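/- Safe screening via Sasvi: with u_j^+(λ₂) = max_{θ ∈ Ω} ⟨x_j, θ⟩ and u_j^-(λ₂) = max_{θ ∈ Ω} ⟨-x_j, θ⟩, if u_j^+(λ₂) < 1 and u_j^-(λ₂) < 1, then the j-th coefficient of any optimal Lasso solution at parameter λ₂ is zero. -/

import Mathlib

open RealInnerProductSpace

lemma aux_eps_15 (a b c : ℝ) (hc : 0 ≤ c)
    (h : ∀ s : ℝ, 0 < s → s ≤ 1 → a ≤ b + s * c) : a ≤ b := by
  refine le_of_forall_pos_le_add fun ε hε => ?_
  have hc1 : (0:ℝ) < c + 1 := by linarith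
  have hs : (0:ℝ) < min 1 (ε / (c + 1)) := lt_min one_pos (div_pos hε hc1)
  have h1 := h _ hs (min_le_left _ _)
  have h2 : min 1 (ε / (c + 1)) * c ≤ ε := by
    calc min 1 (ε / (c + 1)) * c ≤ (ε / (c + 1)) * c :=
          mul_le_mul_of_nonneg_right (min_le_right _ _) hc
      _ ≤ ε := by rw [div_mul_eq_mul_div, div_le_iff₀ hc1]; nlinarith
  linarith

set_option maxHeartbeats 1000000 in
/-- Sasvi safe screening: with `u_j⁺ = max_{θ ∈ Ω} ⟪x_j, θ⟫` and
`u_j⁻ = max_{θ ∈ Ω} ⟪-x_j, θ⟫`, if `u_j⁺ < 1` and `u_j⁻ < 1`, then the `j`-th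
coefficient of any optimal Lasso solution at parameter `λ₂` is zero. -/
theorem stmt_15 {n p : ℕ} (X : Fin p → EuclideanSpace ℝ (Fin n))
    (y : EuclideanSpace ℝ (Fin n)) (lam1 lam2 : ℝ) (hlam2 : 0 < lam2) (hlam12 : lam2 < lam1)
    (θ1 : EuclideanSpace ℝ (Fin n))
    (hθ1mem : ∀ j, |(⟪X j, θ1⟫)| ≤ 1)
    (hθ1opt : ∀ θ : EuclideanSpace ℝ (Fin n), (∀ j, |(⟪X j, θ⟫)| ≤ 1) →
      ‖θ1 - (1 / lam1) • y‖ ≤ ‖θ - (1 / lam1) • y‖)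
    (j : Fin p) (uplus uminus : ℝ)
    (huplus : IsGreatest {v : ℝ | ∃ θ : EuclideanSpace ℝ (Fin n),
        (⟪θ1 - (1 / lam1) • y, θ - θ1⟫ ≥ 0 ∧ ⟪θ - (1 / lam2) • y, θ1 - θ⟫ ≥ 0) ∧
        v = ⟪X j, θ⟫} uplus)
    (huminus : IsGreatest {v : ℝ | ∃ θ : EuclideanSpace ℝ (Fin n),
        (⟪θ1 - (1 / lam1) • y, θ - θ1⟫ ≥ 0 ∧ ⟪θ - (1 / lam2) • y, θ1 - θ⟫ ≥ 0) ∧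
        v = ⟪-X j, θ⟫} uminus)
    (hup : uplus < 1) (hum : uminus < 1)
    (β2 : Fin p → ℝ)
    (hβ2opt : ∀ β : Fin p → ℝ,
      (1 / 2) * ‖(∑ i, β2 i • X i) - y‖ ^ 2 + lam2 * ∑ i, |β2 i| ≤
      (1 / 2) * ‖(∑ i, β i • X i) - y‖ ^ 2 + lam2 * ∑ i, |β i|) :
    β2 j = 0 := by
  set A : EuclideanSpace ℝ (Fin n) := ∑ i, β2 i • X i with hA
  set θ2 : EuclideanSpace ℝ (Fin n) := lam2⁻¹ • (y - A) with hθ2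
  -- inner product of X i with θ2
  have hinner : ∀ i : Fin p, lam2 * ⟪X i, θ2⟫ = -⟪A - y, X i⟫ := by
    intro i
    rw [hθ2, real_inner_smul_right]
    have : ⟪X i, y - A⟫ = -⟪A - y, X i⟫ := by
      rw [real_inner_comm]
      rw [show y - A = -(A - y) by abel, inner_neg_left]
    rw [this, ← mul_assoc, mul_inv_cancel₀ hlam2.ne', one_mul]
  -- key first-order inequality
  have key : ∀ (i : Fin p) (t : ℝ),
      0 ≤ -(t * (lam2 * ⟪X i, θ2⟫)) + t ^ 2 * ‖X i‖ ^ 2 / 2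
        + lam2 * (|β2 i + t| - |β2 i|) := by
    intro i t
    have hsum : (∑ k, (Function.update β2 i (β2 i + t)) k • X k) = A + t • X i := by
      have hcong : ∀ k : Fin p, (Function.update β2 i (β2 i + t)) k • X k
          = β2 k • X k + (if k = i then t • X i else 0) := by
        intro k
        by_cases h : k = i
        · subst h; simp [Function.update_self, add_smul]
        · simp [Function.update_of_ne h, h]
      rw [Finset.sum_congr rfl (fun k _ => hcong k), Finset.sum_add_distrib,
        Finset.sum_ite_eq' Finset.univ i]
      simp [hA]
    have habs : (∑ k, |(Function.update β2 i (β2 i + t)) k|)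
        = (∑ k, |β2 k|) + (|β2 i + t| - |β2 i|) := by
      have hcong : ∀ k : Fin p, |(Function.update β2 i (β2 i + t)) k|
          = |β2 k| + (if k = i then |β2 i + t| - |β2 i| else 0) := by
        intro k
        by_cases h : k = i
        · subst h; simp [Function.update_self]
        · simp [Function.update_of_ne h, h]
      rw [Finset.sum_congr rfl (fun k _ => hcong k), Finset.sum_add_distrib,
        Finset.sum_ite_eq' Finset.univ i]
      simp
    have hopt := hβ2opt (Function.update β2 i (β2 i + t))
    rw [hsum, habs] at hopt
    have hnorm : ‖A + t • X i - y‖ ^ 2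
        = ‖A - y‖ ^ 2 + 2 * (t * ⟪A - y, X i⟫) + t ^ 2 * ‖X i‖ ^ 2 := by
      have h1 : A + t • X i - y = (A - y) + t • X i := by abel
      rw [h1, norm_add_sq_real, real_inner_smul_right, norm_smul, Real.norm_eq_abs]
      rw [mul_pow, sq_abs]
    rw [hnorm] at hopt
    have heq : -(t * (lam2 * ⟪X i, θ2⟫)) = t * ⟪A - y, X i⟫ := by
      rw [hinner i]; ring
    rw [heq]
    linarith
  -- upper bound on inner products
  have gub : ∀ i : Fin p, ⟪X i, θ2⟫ ≤ 1 := by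
    intro i
    have h : lam2 * ⟪X i, θ2⟫ ≤ lam2 + ‖X i‖ ^ 2 / 2 * 1 → True := fun _ => trivial
    have hle : lam2 * ⟪X i, θ2⟫ ≤ lam2 := by
      apply aux_eps_15 _ _ (‖X i‖ ^ 2 / 2) (by positivity)
      intro s hs hs1
      have hk := key i s
      have habs : |β2 i + s| - |β2 i| ≤ s := by
        have := abs_add_le (β2 i) s
        have := abs_of_pos hs
        linarith [abs_add_le (β2 i) s, abs_of_pos hs]
      have : lam2 * (|β2 i + s| - |β2 i|) ≤ lam2 * s :=
        mul_le_mul_of_nonneg_left habs hlam2.le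
      nlinarith
    have := (mul_le_mul_iff_right₀ hlam2).mp (by linarith [hle] : lam2 * ⟪X i, θ2⟫ ≤ lam2 * 1)
    linarith
  have glb : ∀ i : Fin p, -1 ≤ ⟪X i, θ2⟫ := by
    intro i
    have hle : lam2 * (-⟪X i, θ2⟫) ≤ lam2 := by
      apply aux_eps_15 _ _ (‖X i‖ ^ 2 / 2) (by positivity)
      intro s hs hs1
      have hk := key i (-s)
      have habs : |β2 i + -s| - |β2 i| ≤ s := by
        have h1 := abs_add_le (β2 i) (-s)
        have h2 : |(-s : ℝ)| = s := by rw [abs_neg, abs_of_pos hs]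
        linarith
      have : lam2 * (|β2 i + -s| - |β2 i|) ≤ lam2 * s :=
        mul_le_mul_of_nonneg_left habs hlam2.le
      nlinarith
    have := (mul_le_mul_iff_right₀ hlam2).mp (by linarith [hle] : lam2 * (-⟪X i, θ2⟫) ≤ lam2 * 1)
    linarith
  -- activity condition
  have gact : ∀ i : Fin p, |β2 i| ≤ β2 i * ⟪X i, θ2⟫ := by
    intro i
    have hle : lam2 * |β2 i| ≤ lam2 * (β2 i * ⟪X i, θ2⟫) := by
      apply aux_eps_15 _ _ ((β2 i) ^ 2 * ‖X i‖ ^ 2 / 2) (by positivity)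
      intro s hs hs1
      have hk := key i (-s * β2 i)
      have habs : |β2 i + -s * β2 i| = (1 - s) * |β2 i| := by
        have h1 : β2 i + -s * β2 i = (1 - s) * β2 i := by ring
        rw [h1, abs_mul, abs_of_nonneg (by linarith : (0:ℝ) ≤ 1 - s)]
      rw [habs] at hk
      nlinarith
    exact le_of_mul_le_mul_left (by linarith) hlam2
  have hθ2K : ∀ i : Fin p, |⟪X i, θ2⟫| ≤ 1 := fun i => abs_le.mpr ⟨glb i, gub i⟩
  -- variational inequality from θ1 optimality
  set c1 : EuclideanSpace ℝ (Fin n) := (1 / lam1) • y with hc1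
  have hvar : ⟪θ1 - c1, θ2 - θ1⟫ ≥ 0 := by
    have hle : -⟪θ1 - c1, θ2 - θ1⟫ ≤ 0 := by
      apply aux_eps_15 _ _ (‖θ2 - θ1‖ ^ 2 / 2) (by positivity)
      intro s hs hs1
      set θs : EuclideanSpace ℝ (Fin n) := θ1 + s • (θ2 - θ1) with hθs
      have hfeas : ∀ i : Fin p, |⟪X i, θs⟫| ≤ 1 := by
        intro i
        have h1 : ⟪X i, θs⟫ = (1 - s) * ⟪X i, θ1⟫ + s * ⟪X i, θ2⟫ := by
          rw [hθs, inner_add_right, real_inner_smul_right, inner_sub_right]; ring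
        rw [h1]
        have h2 := hθ1mem i
        have h3 := hθ2K i
        have h4 := abs_add_le ((1 - s) * ⟪X i, θ1⟫) (s * ⟪X i, θ2⟫)
        rw [abs_mul, abs_mul, abs_of_nonneg (by linarith : (0:ℝ) ≤ 1 - s),
          abs_of_pos hs] at h4
        nlinarith [abs_nonneg (⟪X i, θ1⟫), abs_nonneg (⟪X i, θ2⟫)]
      have hle2 := hθ1opt θs hfeas
      have hsq : ‖θ1 - c1‖ ^ 2 ≤ ‖θs - c1‖ ^ 2 := by
        have := pow_le_pow_left₀ (norm_nonneg _) hle2 2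
        simpa [hc1] using this
      have hθsc : θs - c1 = (θ1 - c1) + s • (θ2 - θ1) := by rw [hθs]; abel
      rw [hθsc, norm_add_sq_real, real_inner_smul_right, norm_smul,
        Real.norm_eq_abs, mul_pow, sq_abs] at hsq
      nlinarith
    linarith
  -- second Ω condition
  have hvar2 : ⟪θ2 - (1 / lam2) • y, θ1 - θ2⟫ ≥ 0 := by
    have hθ2y : θ2 - (1 / lam2) • y = -(lam2⁻¹ • A) := by
      rw [hθ2, one_div, smul_sub]
      abel
    rw [hθ2y, inner_neg_left, real_inner_smul_left]
    have hAθ : ∀ θ : EuclideanSpace ℝ (Fin n), ⟪A, θ⟫ = ∑ i, β2 i * ⟪X i, θ⟫ := by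
      intro θ
      rw [hA, sum_inner]
      exact Finset.sum_congr rfl fun i _ => real_inner_smul_left _ _ _
    have hle1 : ⟪A, θ1⟫ ≤ ∑ i, |β2 i| := by
      rw [hAθ]
      apply Finset.sum_le_sum
      intro i _
      calc β2 i * ⟪X i, θ1⟫ ≤ |β2 i * ⟪X i, θ1⟫| := le_abs_self _
        _ = |β2 i| * |⟪X i, θ1⟫| := abs_mul _ _
        _ ≤ |β2 i| * 1 := mul_le_mul_of_nonneg_left (hθ1mem i) (abs_nonneg _)
        _ = |β2 i| := mul_one _
    have hle2 : (∑ i, |β2 i|) ≤ ⟪A, θ2⟫ := by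
      rw [hAθ]
      exact Finset.sum_le_sum fun i _ => gact i
    have hsub : ⟪A, θ1 - θ2⟫ = ⟪A, θ1⟫ - ⟪A, θ2⟫ := inner_sub_right _ _ _
    have : ⟪A, θ1 - θ2⟫ ≤ 0 := by rw [hsub]; linarith
    have hpos : (0:ℝ) < lam2⁻¹ := inv_pos.mpr hlam2
    nlinarith
  -- membership in Ω values
  have hmemp : ⟪X j, θ2⟫ ≤ uplus := huplus.2 ⟨θ2, ⟨hvar, hvar2⟩, rfl⟩
  have hmemm : -⟪X j, θ2⟫ ≤ uminus := by
    have := huminus.2 ⟨θ2, ⟨hvar, hvar2⟩, rfl⟩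
    rwa [inner_neg_left] at this
  have habslt : |⟪X j, θ2⟫| < 1 := abs_lt.mpr ⟨by linarith, by linarith⟩
  by_contra hb
  have hbpos : 0 < |β2 j| := abs_pos.mpr hb
  have h1 := gact j
  have h2 : β2 j * ⟪X j, θ2⟫ ≤ |β2 j| * |⟪X j, θ2⟫| := by
    calc β2 j * ⟪X j, θ2⟫ ≤ |β2 j * ⟪X j, θ2⟫| := le_abs_self _
      _ = |β2 j| * |⟪X j, θ2⟫| := abs_mul _ _
  nlinarith
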